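/- For every natural number m, and for any p₀ > 1 large enough that θ_m is positive and continuous on [p₀, ∞), one has ∫_{p₀}^∞ dp / (p θ_m(p)) = ∞, and consequently θ_m is an admissible function. -/

import Mathlib

open Set Filter Topology MeasureTheory

lemma iterexp_mono : Monotone (fun n => Real.exp^[n] 1) := by
  apply monotone_nat_of_le_succ
  intro n
  rw [Function.iterate_succ_apply']
  have := Real.add_one_le_exp (Real.exp^[n] 1)
  linarith

lemma iterexp_ge_one (n : ℕ) : 1 ≤ Real.exp^[n] 1 := by
  simpa using iterexp_mono (Nat.zero_le n)

lemma iterlog_ge_one : ∀ (k : ℕ) (p : ℝ), Real.exp^[k] 1 ≤ p → 1 ≤ Real.log^[k] p := by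
  intro k
  induction k with
  | zero => intro p hp; simpa using hp
  | succ k ih =>
    intro p hp
    rw [Function.iterate_succ_apply' Real.exp] at hp
    have h1 : Real.exp^[k] 1 ≤ Real.log p := by
      have := Real.log_le_log (Real.exp_pos _) hp
      rwa [Real.log_exp] at this
    rw [Function.iterate_succ_apply]
    exact ih _ h1

lemma tendsto_iterlog (n : ℕ) : Tendsto (Real.log^[n]) atTop atTop := by
  induction n with
  | zero => simpa using tendsto_id
  | succ n ih =>
    rw [Function.iterate_succ']
    exact Real.tendsto_log_atTop.comp ih

lemma hasDerivAt_iterlog : ∀ (n : ℕ) (p : ℝ), (∀ k < n, 0 < Real.log^[k] p) →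
    HasDerivAt (Real.log^[n]) (∏ k ∈ Finset.range n, Real.log^[k] p)⁻¹ p := by
  intro n
  induction n with
  | zero => intro p _; simpa using hasDerivAt_id p
  | succ n ih =>
    intro p hp
    have h1 : HasDerivAt (Real.log^[n]) (∏ k ∈ Finset.range n, Real.log^[k] p)⁻¹ p :=
      ih p (fun k hk => hp k (hk.trans (Nat.lt_succ_self n)))
    have h2 : HasDerivAt Real.log (Real.log^[n] p)⁻¹ (Real.log^[n] p) :=
      Real.hasDerivAt_log (ne_of_gt (hp n (Nat.lt_succ_self n)))
    have h3 := h2.comp p h1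
    rw [← Function.iterate_succ' Real.log] at h3
    refine h3.congr_deriv ?_
    rw [Finset.prod_range_succ, mul_inv, mul_comm]

lemma prod_range_succ_eq_mul (m : ℕ) (p : ℝ) :
    ∏ k ∈ Finset.range (m+1), Real.log^[k] p = p * ∏ k ∈ Finset.Icc 1 m, Real.log^[k] p := by
  rw [Finset.prod_range_succ', Function.iterate_zero_apply, mul_comm]
  congr 1
  rw [← Finset.Ico_add_one_right_eq_Icc, Finset.prod_Ico_eq_prod_range]
  simp [add_comm]

lemma key1 (m : ℕ) (p₁ : ℝ) (hp₁ : Real.exp^[m] 1 ≤ p₁) :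
    ∫⁻ p in Ioi p₁, ENNReal.ofReal
      (1 / (p * ∏ k ∈ Finset.Icc 1 m, Real.log^[k] p)) = ⊤ := by
  set f : ℝ → ℝ := fun p => 1 / (p * ∏ k ∈ Finset.Icc 1 m, Real.log^[k] p) with hf
  set F : ℝ → ℝ := Real.log^[m+1] with hF
  have hp₁1 : (1:ℝ) ≤ p₁ := (iterexp_ge_one m).trans hp₁
  have hpos : ∀ p ≥ p₁, ∀ k, k ≤ m → 0 < Real.log^[k] p := by
    intro p hp k hk
    have : Real.exp^[k] 1 ≤ p := ((iterexp_mono hk).trans hp₁).trans hp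
    linarith [iterlog_ge_one k p this]
  have hderiv : ∀ p ≥ p₁, HasDerivAt F (f p) p := by
    intro p hp
    have h := hasDerivAt_iterlog (m+1) p
      (fun k hk => hpos p hp k (Nat.lt_succ_iff.mp hk))
    rw [prod_range_succ_eq_mul] at h
    simpa [hf, hF, one_div] using h
  have hcont : ∀ p ≥ p₁, ContinuousAt f p := by
    intro p hp
    have h1 : ∀ k ≤ m, ContinuousAt (Real.log^[k]) p := by
      intro k hk
      exact (hasDerivAt_iterlog k p (fun j hj => hpos p hp j ((Nat.le_of_lt hj).trans hk))).continuousAt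
    have h2 : ContinuousAt (fun p => p * ∏ k ∈ Finset.Icc 1 m, Real.log^[k] p) p :=
      continuousAt_id.mul (tendsto_finset_prod _
        (fun k hk => h1 k (Finset.mem_Icc.mp hk).2))
    have hne : p * ∏ k ∈ Finset.Icc 1 m, Real.log^[k] p ≠ 0 := by
      have := Finset.prod_pos (s := Finset.Icc 1 m) (f := fun k => Real.log^[k] p) (fun k hk => hpos p hp k (Finset.mem_Icc.mp hk).2)
      exact ne_of_gt (mul_pos (by linarith) this)
    simpa only [hf, one_div, Pi.inv_def] using h2.inv₀ hne
  have hfpos : ∀ p ≥ p₁, 0 < f p := by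
    intro p hp
    have := Finset.prod_pos (s := Finset.Icc 1 m) (f := fun k => Real.log^[k] p) (fun k hk => hpos p hp k (Finset.mem_Icc.mp hk).2)
    simp only [hf]
    exact one_div_pos.mpr (mul_pos (by linarith) this)
  have hFx : Tendsto F atTop atTop := tendsto_iterlog (m+1)
  by_contra hC
  set C := ∫⁻ p in Ioi p₁, ENNReal.ofReal (f p) with hCdef
  have hCne : C ≠ ⊤ := hC
  obtain ⟨x, hx⟩ := ((hFx.eventually_ge_atTop (C.toReal + F p₁ + 1)).and
    (eventually_ge_atTop p₁)).exists
  obtain ⟨hFxbig, hxp₁⟩ := hx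
  -- interval integral
  have hcontOn : ContinuousOn f (Icc p₁ x) := fun t ht => (hcont t ht.1).continuousWithinAt
  have hint : IntervalIntegrable f volume p₁ x := by
    apply ContinuousOn.intervalIntegrable
    rwa [uIcc_of_le hxp₁]
  have hFTC : ∫ p in p₁..x, f p = F x - F p₁ := by
    apply intervalIntegral.integral_eq_sub_of_hasDerivAt
    · intro t ht
      rw [uIcc_of_le hxp₁] at ht
      exact hderiv t ht.1
    · exact hint
  have hIocInt : IntegrableOn f (Ioc p₁ x) volume := by
    rw [← intervalIntegrable_iff_integrableOn_Ioc_of_le hxp₁]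
    exact hint
  have hle : ENNReal.ofReal (F x - F p₁) ≤ C := by
    calc ENNReal.ofReal (F x - F p₁)
        = ENNReal.ofReal (∫ p in Ioc p₁ x, f p) := by
          rw [← hFTC, intervalIntegral.integral_of_le hxp₁]
      _ = ∫⁻ p in Ioc p₁ x, ENNReal.ofReal (f p) := by
          apply ofReal_integral_eq_lintegral_ofReal hIocInt
          filter_upwards [ae_restrict_mem measurableSet_Ioc] with t ht
          exact (hfpos t ht.1.le).le
      _ ≤ C := lintegral_mono_set Ioc_subset_Ioi_self
  have : F x - F p₁ ≤ C.toReal := by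
    rw [← ENNReal.ofReal_le_iff_le_toReal hCne] at *
    exact hle
  linarith

lemma key2 (m : ℕ) (p₂ : ℝ) (hp₂ : Real.exp^[m] 1 ≤ p₂) (c : ℝ) (hc : 0 < c) :
    ∫⁻ s in Ioc (0:ℝ) (Real.exp (-p₂)), ENNReal.ofReal
      (c * (1 / (s * ((-Real.log s) * ∏ k ∈ Finset.Icc 1 m, Real.log^[k] (-Real.log s)))))
      = ⊤ := by
  set δ := Real.exp (-p₂) with hδ
  have hδpos : 0 < δ := Real.exp_pos _
  set Θ : ℝ → ℝ := fun q => ∏ k ∈ Finset.Icc 1 m, Real.log^[k] q with hΘ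
  set g : ℝ → ℝ := fun s => c * (1 / (s * ((-Real.log s) * Θ (-Real.log s)))) with hg
  set G : ℝ → ℝ := fun s => Real.log^[m+1] (-Real.log s) with hG
  have hp₂1 : (1:ℝ) ≤ p₂ := (iterexp_ge_one m).trans hp₂
  -- for s ∈ (0, δ], -log s ≥ p₂
  have hqbig : ∀ s, 0 < s → s ≤ δ → p₂ ≤ -Real.log s := by
    intro s hs hsδ
    have := Real.log_le_log hs hsδ
    rw [hδ, Real.log_exp] at this
    linarith
  have hpos : ∀ q, p₂ ≤ q → ∀ k, k ≤ m → 0 < Real.log^[k] q := by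
    intro q hq k hk
    have : Real.exp^[k] 1 ≤ q := ((iterexp_mono hk).trans hp₂).trans hq
    linarith [iterlog_ge_one k q this]
  have hΘpos : ∀ q, p₂ ≤ q → 0 < Θ q := by
    intro q hq
    exact Finset.prod_pos (s := Finset.Icc 1 m) (f := fun k => Real.log^[k] q)
      (fun k hk => hpos q hq k (Finset.mem_Icc.mp hk).2)
  have hqpos : ∀ q, p₂ ≤ q → 0 < q := fun q hq => lt_of_lt_of_le (by linarith) hq
  have hderiv : ∀ s, 0 < s → s ≤ δ → HasDerivAt (fun s => -(G s)) (g s / c) s := by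
    intro s hs hsδ
    have hq := hqbig s hs hsδ
    have h1 : HasDerivAt (fun s => -Real.log s) (-s⁻¹) s :=
      (Real.hasDerivAt_log (ne_of_gt hs)).neg
    have h2 : HasDerivAt (Real.log^[m+1])
        (∏ k ∈ Finset.range (m+1), Real.log^[k] (-Real.log s))⁻¹ (-Real.log s) :=
      hasDerivAt_iterlog (m+1) _ (fun k hk => hpos _ hq k (Nat.lt_succ_iff.mp hk))
    have h3 := (h2.comp s h1).neg
    have hΘp := hΘpos _ hq
    rw [prod_range_succ_eq_mul] at h3
    have hlne : Real.log s ≠ 0 := by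
      intro h; rw [h, neg_zero] at hq; linarith
    have hΘne : (∏ k ∈ Finset.Icc 1 m, Real.log^[k] (-Real.log s)) ≠ 0 := hΘp.ne'
    refine h3.congr_deriv ?_
    rw [hg]
    field_simp
    simp only [hΘ]
  have hcont : ∀ s, 0 < s → s ≤ δ → ContinuousAt g s := by
    intro s hs hsδ
    have hq := hqbig s hs hsδ
    have hnl : ContinuousAt (fun s : ℝ => -Real.log s) s :=
      ((Real.continuousAt_log (ne_of_gt hs)).neg)
    have h1 : ∀ k ≤ m, ContinuousAt (Real.log^[k]) (-Real.log s) := by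
      intro k hk
      exact (hasDerivAt_iterlog k _ (fun j hj => hpos _ hq j ((Nat.le_of_lt hj).trans hk))).continuousAt
    have h2 : ContinuousAt (fun s => Θ (-Real.log s)) s := by
      have hcΘ : ContinuousAt Θ (-Real.log s) :=
        tendsto_finset_prod _ (fun k hk => h1 k (Finset.mem_Icc.mp hk).2)
      exact ContinuousAt.comp (f := fun s : ℝ => -Real.log s) (g := Θ) hcΘ hnl
    have hden : ContinuousAt (fun s => s * ((-Real.log s) * Θ (-Real.log s))) s :=
      continuousAt_id.mul (hnl.mul h2)
    have hne : s * ((-Real.log s) * Θ (-Real.log s)) ≠ 0 :=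
      ne_of_gt (mul_pos hs (mul_pos (hqpos _ hq) (hΘpos _ hq)))
    exact continuousAt_const.mul (by simpa only [one_div, Pi.inv_def] using hden.inv₀ hne)
  have hgpos : ∀ s, 0 < s → s ≤ δ → 0 < g s := by
    intro s hs hsδ
    have hq := hqbig s hs hsδ
    have := mul_pos hs (mul_pos (hqpos _ hq) (hΘpos _ hq))
    rw [hg]
    exact mul_pos hc (one_div_pos.mpr this)
  have hGtop : Tendsto G (𝓝[>] (0:ℝ)) atTop := by
    apply (tendsto_iterlog (m+1)).comp
    exact tendsto_neg_atBot_atTop.comp Real.tendsto_log_nhdsGT_zero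
  by_contra hC
  set C := ∫⁻ s in Ioc (0:ℝ) δ, ENNReal.ofReal (g s) with hCdef
  have hCne : C ≠ ⊤ := hC
  have hmem : Ioo (0:ℝ) δ ∈ 𝓝[>] (0:ℝ) := Ioo_mem_nhdsGT hδpos
  obtain ⟨a, haG, ha0, haδ⟩ :
      ∃ a, (C.toReal / c + G δ + 1 ≤ G a) ∧ 0 < a ∧ a < δ := by
    have := (hGtop.eventually_ge_atTop (C.toReal / c + G δ + 1)).and hmem
    obtain ⟨a, h1, h2⟩ := this.exists
    exact ⟨a, h1, h2.1, h2.2⟩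
  have haδle : a ≤ δ := haδ.le
  have hcontOn : ContinuousOn g (Icc a δ) := fun t ht =>
    (hcont t (lt_of_lt_of_le ha0 ht.1) ht.2).continuousWithinAt
  have hint : IntervalIntegrable g volume a δ := by
    apply ContinuousOn.intervalIntegrable
    rwa [uIcc_of_le haδle]
  have hFTC : ∫ s in a..δ, g s = c * (G a - G δ) := by
    have h0 : ∫ s in a..δ, g s / c = -(G δ) - -(G a) := by
      exact intervalIntegral.integral_eq_sub_of_hasDerivAt (f := fun s => -G s)
        (fun t ht => by
          rw [uIcc_of_le haδle] at ht
          exact hderiv t (lt_of_lt_of_le ha0 ht.1) ht.2)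
        (hint.div_const c)
    rw [intervalIntegral.integral_div, div_eq_iff hc.ne'] at h0
    rw [h0]; ring
  have hIocInt : IntegrableOn g (Ioc a δ) volume := by
    rw [← intervalIntegrable_iff_integrableOn_Ioc_of_le haδle]
    exact hint
  have hle : ENNReal.ofReal (c * (G a - G δ)) ≤ C := by
    calc ENNReal.ofReal (c * (G a - G δ))
        = ENNReal.ofReal (∫ s in Ioc a δ, g s) := by
          rw [← hFTC, intervalIntegral.integral_of_le haδle]
      _ = ∫⁻ s in Ioc a δ, ENNReal.ofReal (g s) := by
          apply ofReal_integral_eq_lintegral_ofReal hIocInt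
          filter_upwards [ae_restrict_mem measurableSet_Ioc] with t ht
          exact (hgpos t (lt_of_lt_of_le ha0 ht.1.le) ht.2).le
      _ ≤ C := lintegral_mono_set (Ioc_subset_Ioc_left ha0.le)
  have : c * (G a - G δ) ≤ C.toReal := by
    rw [← ENNReal.ofReal_le_iff_le_toReal hCne]
    exact hle
  have hGa : C.toReal / c + 1 ≤ G a - G δ := by linarith
  have h6 : C.toReal + c ≤ c * (G a - G δ) := by
    calc C.toReal + c = c * (C.toReal / c + 1) := by field_simp
      _ ≤ c * (G a - G δ) := mul_le_mul_of_nonneg_left hGa hc.le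
  linarith

lemma lower_bound (m : ℕ) (p₀ : ℝ) (hp₀ : 1 < p₀) (θ : ℝ → ℝ)
    (hθ : ∀ p, θ p = ∏ k ∈ Finset.Icc 1 m, Real.log^[k] p)
    (hθc : ContinuousOn θ (Ici p₀)) (hθpos : ∀ p ≥ p₀, 0 < θ p) :
    ∃ c₂ > 0, ∀ q ≥ p₀, c₂ ≤ q * θ q := by
  set Q := max p₀ (Real.exp^[m] 1) with hQ
  have hpQ : p₀ ≤ Q := le_max_left _ _
  have hcontOn : ContinuousOn (fun q => q * θ q) (Icc p₀ Q) :=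
    (continuousOn_id.mul (hθc.mono Icc_subset_Ici_self))
  obtain ⟨q₀, hq₀mem, hq₀min⟩ :=
    isCompact_Icc.exists_isMinOn (nonempty_Icc.mpr hpQ) hcontOn
  have hv : 0 < q₀ * θ q₀ :=
    mul_pos (lt_of_lt_of_le (by linarith : (0:ℝ) < p₀) hq₀mem.1) (hθpos q₀ hq₀mem.1)
  refine ⟨min (q₀ * θ q₀) p₀, lt_min hv (by linarith), ?_⟩
  intro q hq
  rcases le_or_gt q Q with h | h
  · exact le_trans (min_le_left _ _) (hq₀min ⟨hq, h⟩)
  · have hθq : 1 ≤ θ q := by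
      rw [hθ]
      have h1 : ∏ k ∈ Finset.Icc 1 m, (1:ℝ) ≤ ∏ k ∈ Finset.Icc 1 m, Real.log^[k] q := by
        apply Finset.prod_le_prod (fun k _ => zero_le_one)
        intro k hk
        apply iterlog_ge_one
        calc Real.exp^[k] 1 ≤ Real.exp^[m] 1 := iterexp_mono (Finset.mem_Icc.mp hk).2
          _ ≤ Q := le_max_right _ _
          _ ≤ q := h.le
      simpa using h1
    calc min (q₀ * θ q₀) p₀ ≤ p₀ := min_le_right _ _
      _ ≤ q * 1 := by linarith
      _ ≤ q * θ q := by
          apply mul_le_mul_of_nonneg_left hθq (by linarith)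


/-- For every natural `m`, with `θ_m(p) = (ln p)(ln ln p)⋯(lnᵐ p)` (and `θ_0 = 1`), and any
`p₀ > 1` large enough that `θ_m` is positive and continuous on `[p₀, ∞)`, one has
`∫_{p₀}^∞ dp/(p θ_m(p)) = ∞`, and consequently `θ_m` is admissible:
`∫₀¹ ds / β_{M,φ}(s) = ∞` for every `M > 0`, where `φ(p) = p θ_m(p)`. -/
theorem stmt_6 (m : ℕ) (p₀ : ℝ) (hp₀ : 1 < p₀)
    (θ : ℝ → ℝ) (hθ : ∀ p, θ p = ∏ k ∈ Finset.Icc 1 m, Real.log^[k] p)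
    (hθc : ContinuousOn θ (Ici p₀)) (hθpos : ∀ p ≥ p₀, 0 < θ p) :
    (∫⁻ p in Ioi p₀, ENNReal.ofReal (1 / (p * θ p)) = ⊤) ∧
    ∀ M > 0, ∫⁻ s in Ioo (0:ℝ) 1, ENNReal.ofReal
      (1 / sInf ((fun ε => M ^ ε * s ^ (1 - ε) * ((1 / ε) * θ (1 / ε))) '' Ioc 0 (1 / p₀)))
      = ⊤ := by
  constructor
  · simp only [hθ]
    rw [eq_top_iff, ← key1 m (max p₀ (Real.exp^[m] 1)) (le_max_right _ _)]
    exact lintegral_mono_set (Ioi_subset_Ioi (le_max_left _ _))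
  · intro M hM
    set p₂ := max p₀ (Real.exp^[m] 1) with hp₂def
    have hp₂e : Real.exp^[m] 1 ≤ p₂ := le_max_right _ _
    have hp₂p₀ : p₀ ≤ p₂ := le_max_left _ _
    have hp₂1 : (1:ℝ) ≤ p₂ := (iterexp_ge_one m).trans hp₂e
    set δ := Real.exp (-p₂) with hδdef
    have hδpos : 0 < δ := Real.exp_pos _
    have hδ1 : δ < 1 := by
      rw [hδdef, Real.exp_lt_one_iff]; linarith
    obtain ⟨c₂, hc₂pos, hc₂⟩ := lower_bound m p₀ hp₀ θ hθ hθc hθpos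
    set c₁ := min 1 (M ^ (1/p₀)) with hc₁def
    have hc₁pos : 0 < c₁ := lt_min one_pos (Real.rpow_pos_of_pos hM _)
    set C₂ := Real.exp 1 * max 1 M with hC₂def
    have hC₂pos : 0 < C₂ := mul_pos (Real.exp_pos _) (lt_of_lt_of_le one_pos (le_max_left _ _))
    have hkey := key2 m p₂ hp₂e (1/C₂) (by positivity)
    rw [eq_top_iff, ← hkey]
    have hsub : Ioc (0:ℝ) δ ⊆ Ioo (0:ℝ) 1 := fun x hx => ⟨hx.1, lt_of_le_of_lt hx.2 hδ1⟩
    calc ∫⁻ s in Ioc (0:ℝ) δ, ENNReal.ofReal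
          ((1/C₂) * (1 / (s * ((-Real.log s) * ∏ k ∈ Finset.Icc 1 m, Real.log^[k] (-Real.log s)))))
        ≤ ∫⁻ s in Ioc (0:ℝ) δ, ENNReal.ofReal
          (1 / sInf ((fun ε => M ^ ε * s ^ (1 - ε) * ((1 / ε) * θ (1 / ε))) '' Ioc 0 (1 / p₀))) := by
          apply lintegral_mono_ae
          filter_upwards [ae_restrict_mem measurableSet_Ioc] with s hs
          apply ENNReal.ofReal_le_ofReal
          -- main pointwise bound
          obtain ⟨hs0, hsδ⟩ := hs
          set q := -Real.log s with hqdef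
          have hq : p₂ ≤ q := by
            have := Real.log_le_log hs0 hsδ
            rw [hδdef, Real.log_exp] at this
            rw [hqdef]; linarith
          have hq0 : 0 < q := by linarith
          have hqp₀ : p₀ ≤ q := le_trans hp₂p₀ hq
          have hθqpos : 0 < θ q := hθpos q hqp₀
          have hlogne : Real.log s ≠ 0 := by
            intro h; rw [hqdef, h, neg_zero] at hq0; exact lt_irrefl 0 hq0
          set S := ((fun ε => M ^ ε * s ^ (1 - ε) * ((1 / ε) * θ (1 / ε))) '' Ioc 0 (1 / p₀)) with hSdef
          have hp₀pos : (0:ℝ) < p₀ := by linarith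
          -- lower bound for all elements of S
          have helem_lb : ∀ x ∈ S, c₁ * (s * c₂) ≤ x := by
            rintro x ⟨ε, ⟨hε0, hεle⟩, rfl⟩
            have hεinv : p₀ ≤ 1/ε := by
              have h1 := one_div_le_one_div_of_le hε0 hεle
              rwa [one_div_one_div] at h1
            have hM1 : c₁ ≤ M ^ ε := by
              rcases le_or_gt 1 M with h | h
              · calc c₁ ≤ 1 := min_le_left _ _
                  _ = M ^ (0:ℝ) := (Real.rpow_zero M).symm
                  _ ≤ M ^ ε := Real.rpow_le_rpow_of_exponent_le h hε0.le
              · calc c₁ ≤ M ^ (1/p₀) := min_le_right _ _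
                  _ ≤ M ^ ε := Real.rpow_le_rpow_of_exponent_ge hM h.le hεle
            have hs1 : s ≤ s ^ (1 - ε) := by
              have : s ^ (1:ℝ) ≤ s ^ (1 - ε) := by
                apply Real.rpow_le_rpow_of_exponent_ge hs0 (le_of_lt (lt_of_le_of_lt hsδ hδ1))
                linarith
              rwa [Real.rpow_one] at this
            have hθε : c₂ ≤ (1/ε) * θ (1/ε) := hc₂ _ hεinv
            have h1 : c₁ * s ≤ M ^ ε * s ^ (1 - ε) :=
              mul_le_mul hM1 hs1 hs0.le (Real.rpow_nonneg hM.le _)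
            calc c₁ * (s * c₂) = (c₁ * s) * c₂ := by ring
              _ ≤ (M ^ ε * s ^ (1 - ε)) * ((1/ε) * θ (1/ε)) :=
                mul_le_mul h1 hθε hc₂pos.le (by positivity)
          have hSne : S.Nonempty := ⟨_, ⟨1/p₀, ⟨by positivity, le_refl _⟩, rfl⟩⟩
          have hSbdd : BddBelow S := ⟨c₁ * (s * c₂), fun x hx => helem_lb x hx⟩
          have hInfpos : 0 < sInf S :=
            lt_of_lt_of_le (by positivity) (le_csInf hSne helem_lb)
          -- upper bound for sInf S via ε₀ = 1/q
          have hε₀mem : 1/q ∈ Ioc (0:ℝ) (1/p₀) := by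
            constructor
            · positivity
            · exact one_div_le_one_div_of_le hp₀pos hqp₀
          have hval : M ^ (1/q) * s ^ (1 - 1/q) * ((1/(1/q)) * θ (1/(1/q))) ∈ S :=
            ⟨1/q, hε₀mem, rfl⟩
          have hrs : s ^ (1 - 1/q) = Real.exp 1 * s := by
            rw [Real.rpow_def_of_pos hs0]
            have : Real.log s * (1 - 1/q) = Real.log s + 1 := by
              rw [hqdef]
              field_simp
              ring
            rw [this, Real.exp_add, Real.exp_log hs0, mul_comm]
          have hMε : M ^ (1/q) ≤ max 1 M := by
            rcases le_or_gt M 1 with h | h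
            · calc M ^ (1/q) ≤ 1 := Real.rpow_le_one hM.le h (by positivity)
                _ ≤ max 1 M := le_max_left _ _
            · have hq1 : 1/q ≤ 1 := by
                have h4 : 1/q ≤ 1/p₀ := one_div_le_one_div_of_le hp₀pos hqp₀
                have h5 : 1/p₀ ≤ 1 := by rw [div_le_one hp₀pos]; linarith
                linarith
              calc M ^ (1/q) ≤ M ^ (1:ℝ) := Real.rpow_le_rpow_of_exponent_le h.le hq1
                _ = M := Real.rpow_one M
                _ ≤ max 1 M := le_max_right _ _
          have hupper : sInf S ≤ C₂ * (s * (q * θ q)) := by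
            have h2 : sInf S ≤ M ^ (1/q) * s ^ (1 - 1/q) * ((1/(1/q)) * θ (1/(1/q))) :=
              csInf_le hSbdd hval
            rw [one_div_one_div, hrs] at h2
            calc sInf S ≤ M ^ (1/q) * (Real.exp 1 * s) * (q * θ q) := h2
              _ ≤ (max 1 M) * (Real.exp 1 * s) * (q * θ q) := by
                  apply mul_le_mul_of_nonneg_right
                    (mul_le_mul_of_nonneg_right hMε (by positivity))
                  exact mul_nonneg hq0.le hθqpos.le
              _ = C₂ * (s * (q * θ q)) := by rw [hC₂def]; ring
          -- conclude
          have hprodθ : (∏ k ∈ Finset.Icc 1 m, Real.log^[k] q) = θ q := (hθ q).symm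
          rw [hprodθ]
          have hX : 0 < s * (q * θ q) := mul_pos hs0 (mul_pos hq0 hθqpos)
          have h3 : (1/C₂) * (1 / (s * (q * θ q))) = 1 / (C₂ * (s * (q * θ q))) := by
            field_simp
          rw [h3]
          exact one_div_le_one_div_of_le hInfpos hupper
      _ ≤ ∫⁻ s in Ioo (0:ℝ) 1, ENNReal.ofReal
          (1 / sInf ((fun ε => M ^ ε * s ^ (1 - ε) * ((1 / ε) * θ (1 / ε))) '' Ioc 0 (1 / p₀))) :=
        lintegral_mono_set hsub
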